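/- Suppose every arrow of G lies in a directed cycle. If P_G is simplicial, then P_G is smooth: for every facet of P_G, its vertices form a ℤ-basis of the lattice ℤ^d ∩ {x : Σx_i = 0}. -/

import Mathlib

open Finset

/-- `ρ(e) = e_{i} - e_{j}` for an arrow `e = (i,j)`. -/
def rho {V : Type*} [DecidableEq V] (e : V × V) : V → ℝ :=
  fun k => (if k = e.1 then (1 : ℝ) else 0) - (if k = e.2 then (1 : ℝ) else 0)

/-- The polytope `P_G` associated with the arrow set `A` of a directed graph. -/
def polyG {V : Type*} [DecidableEq V] (A : Finset (V × V)) : Set (V → ℝ) :=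
  convexHull ℝ (rho '' (A : Set (V × V)))

/-- Connectivity of the underlying undirected graph of the directed graph with arrow set `A`. -/
def GConnected {V : Type*} [DecidableEq V] (A : Finset (V × V)) : Prop :=
  (SimpleGraph.fromRel (fun i j => (i, j) ∈ A)).Connected

/-- Cyclic successor on `Fin l`. -/
def succAt {l : ℕ} (h : 0 < l) (j : Fin l) : Fin l :=
  ⟨((j : ℕ) + 1) % l, Nat.mod_lt _ h⟩

/-- The data of a cycle in a directed graph on the vertex set `V`:
a list of at least two distinct vertices, cyclically ordered, together with, for each
edge of the cycle, a choice of direction (`ε j = true` means the arrow points forwards). -/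
structure PreCycle (V : Type*) where
  l : ℕ
  two_le : 2 ≤ l
  v : Fin l → V
  ε : Fin l → Bool
  inj : Function.Injective v

namespace PreCycle

variable {V : Type*}

theorem pos (C : PreCycle V) : 0 < C.l :=
  lt_of_lt_of_le Nat.zero_lt_two C.two_le

/-- The cyclically next index. -/
def nxt (C : PreCycle V) (j : Fin C.l) : Fin C.l := succAt C.pos j

/-- The arrow of the cycle corresponding to its `j`-th edge. -/
def arrow (C : PreCycle V) (j : Fin C.l) : V × V :=
  if C.ε j then (C.v j, C.v (C.nxt j)) else (C.v (C.nxt j), C.v j)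

/-- `C` is a cycle in the directed graph with arrow set `A`. -/
def IsCycleIn [DecidableEq V] (C : PreCycle V) (A : Finset (V × V)) : Prop :=
  (∀ j, C.arrow j ∈ A) ∧ Function.Injective C.arrow

/-- A cycle is homogeneous if it has as many forward arrows as backward arrows. -/
def Homogeneous (C : PreCycle V) : Prop :=
  2 * (Finset.univ.filter fun j => C.ε j = true).card = C.l

/-- A directed cycle: all arrows point in the direction of traversal. -/
def IsDirected (C : PreCycle V) : Prop := ∀ j, C.ε j = true

/-- The defining property of the function `μ_C` attached to a homogeneous cycle `C`
(here recorded as a function of the position along the cycle; since the vertices of the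
cycle are distinct this is the same as a function on the cycle vertices):
it is nonnegative, decreases by `1` along forward arrows, increases by `1` along
backward arrows, and has minimum value `0`. -/
def IsMu (C : PreCycle V) (μ : Fin C.l → ℤ) : Prop :=
  (∀ j, 0 ≤ μ j) ∧ (∀ j, μ (C.nxt j) = if C.ε j then μ j - 1 else μ j + 1) ∧ (∃ j, μ j = 0)

end PreCycle

/-- Every arrow of the directed graph with arrow set `A` lies in a directed cycle. -/
def EveryArrowInDirCycle {V : Type*} [DecidableEq V] (A : Finset (V × V)) : Prop :=
  ∀ e ∈ A, ∃ C : PreCycle V, C.IsCycleIn A ∧ C.IsDirected ∧ ∃ j, C.arrow j = e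

/-- The dimension of a subset of `ℝ^V` (the dimension of its affine hull). -/
noncomputable def pdim {V : Type*} (s : Set (V → ℝ)) : ℕ :=
  Module.finrank ℝ (vectorSpan ℝ s)

/-- `F` is a facet of the polytope `P`: a nonempty exposed face of codimension one. -/
def IsFacetOf {V : Type*} (F P : Set (V → ℝ)) : Prop :=
  IsExposed ℝ P F ∧ F.Nonempty ∧ pdim F + 1 = pdim P

/-- A polytope is simplicial if the vertices of every facet are affinely independent. -/
def Simplicial {V : Type*} (P : Set (V → ℝ)) : Prop :=
  ∀ F : Set (V → ℝ), IsFacetOf F P →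
    AffineIndependent ℝ (fun x : (F.extremePoints ℝ) => (x : V → ℝ))

/-- The lattice `ℤ^V ∩ {x : Σ x_i = 0}`, as a subset of `ℝ^V`. -/
def latticeSet (V : Type*) [Fintype V] : Set (V → ℝ) :=
  {x | (∀ i, ∃ z : ℤ, x i = (z : ℝ)) ∧ ∑ i, x i = 0}

/-- The set of integer points of `ℝ^V`. -/
def intLat (V : Type*) : Set (V → ℝ) :=
  {x | ∀ i, ∃ z : ℤ, x i = (z : ℝ)}

/-- `W` is a `ℤ`-basis of (the additive group generated by) `L`. -/
def IsZBasisOf {V : Type*} (W L : Set (V → ℝ)) : Prop :=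
  W ⊆ L ∧ LinearIndependent ℤ (fun x : W => (x : V → ℝ)) ∧
    L ⊆ (Submodule.span ℤ W : Set (V → ℝ))

/-- There is a directed path of length `n` from `i` to `j` in the directed graph `A`. -/
def HasDPath {V : Type*} (A : Finset (V × V)) (i j : V) (n : ℕ) : Prop :=
  ∃ f : Fin (n + 1) → V, f 0 = i ∧ f (Fin.last n) = j ∧
    ∀ k : Fin n, (f k.castSucc, f k.succ) ∈ A

/-- The underlying undirected graph of `A` contains an even cycle. -/
def HasEvenCycle {V : Type*} [DecidableEq V] (A : Finset (V × V)) : Prop :=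
  ∃ C : PreCycle V, 3 ≤ C.l ∧ Even C.l ∧
    ∀ j, (C.v j, C.v (C.nxt j)) ∈ A ∨ (C.v (C.nxt j), C.v j) ∈ A


section Helpers

variable {V : Type*} [DecidableEq V]

/-- `e_a - e_b`. -/
def eV (a b : V) : V → ℝ :=
  fun k => (if k = a then (1 : ℝ) else 0) - (if k = b then (1 : ℝ) else 0)

lemma rho_eq_eV (e : V × V) : rho e = eV e.1 e.2 := rfl

lemma eV_int (a b i : V) : ∃ z : ℤ, eV a b i = (z : ℝ) :=
  ⟨(if i = a then 1 else 0) - (if i = b then 1 else 0), by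
    simp [eV, apply_ite (Int.cast : ℤ → ℝ)]⟩

lemma eV_self (a : V) : eV a a = 0 := by
  funext k; simp [eV]

lemma eV_ne_zero {a b : V} (hab : a ≠ b) : eV a b ≠ 0 := by
  intro h
  have := congrFun h a
  simp [eV, hab] at this

lemma eV_neg (a b : V) : eV b a = - eV a b := by
  funext k; simp only [eV, Pi.neg_apply, Pi.add_apply]; ring

lemma eV_trans (a b c : V) : eV a c = eV a b + eV b c := by
  funext k; simp only [eV, Pi.neg_apply, Pi.add_apply]; ring

lemma eV_eq_iff {a b c d : V} (hab : a ≠ b) (hcd : c ≠ d) :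
    eV c d = eV a b ↔ c = a ∧ d = b := by
  constructor
  · intro h
    have hc := congrFun h c
    have hd := congrFun h d
    simp only [eV, if_pos rfl, if_neg hcd, if_neg (Ne.symm hcd)] at hc hd
    constructor
    · by_cases h1 : c = a <;> by_cases h2 : c = b <;> simp [h1, h2, hab, Ne.symm hab] at hc ⊢ <;> first | rfl | linarith
    · by_cases h1 : d = a <;> by_cases h2 : d = b <;> simp [h1, h2, hab, Ne.symm hab] at hd ⊢ <;> first | rfl | linarith
  · rintro ⟨rfl, rfl⟩; rfl

lemma sum_eV [Fintype V] (a b : V) : ∑ i, eV a b i = 0 := by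
  simp [eV, Finset.sum_sub_distrib]

end Helpers

section Contract

variable {V : Type*} [DecidableEq V]

/-- Contraction of the coordinate `a` onto `b`. -/
def contract (a b : V) : (V → ℝ) →ₗ[ℝ] (V → ℝ) where
  toFun y := fun k => if k = a then 0 else if k = b then y b + y a else y k
  map_add' y z := by
    funext k
    by_cases h1 : k = a
    · simp [h1]
    · by_cases h2 : k = b
      · subst h2; simp [h1]; ring
      · simp [h1, h2]
  map_smul' c y := by
    funext k
    by_cases h1 : k = a
    · simp [h1]
    · by_cases h2 : k = b
      · subst h2; simp [h1]; ring
      · simp [h1, h2]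

lemma contract_apply (a b : V) (y : V → ℝ) (k : V) :
    contract a b y k = if k = a then 0 else if k = b then y b + y a else y k := rfl

lemma contract_ker {a b : V} (hab : a ≠ b) (y : V → ℝ) (hy : contract a b y = 0) :
    y = y a • eV a b := by
  funext k
  have hk := congrFun hy k
  rw [contract_apply] at hk
  by_cases h1 : k = a
  · subst h1; simp [eV, hab]
  · by_cases h2 : k = b
    · subst h2
      simp only [if_neg h1, if_pos rfl, Pi.zero_apply] at hk
      norm_num at hk
      simp [eV, Ne.symm hab]
      linarith
    · simp only [if_neg h1, if_neg h2, Pi.zero_apply] at hk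
      simp [eV, h1, h2, hk]

lemma contract_eV_self {a b : V} (hab : a ≠ b) : contract a b (eV a b) = 0 := by
  funext k
  rw [contract_apply]
  by_cases h1 : k = a
  · simp [h1]
  · by_cases h2 : k = b <;> simp [h1, h2, eV, hab, Ne.symm hab]

lemma contract_eV {a b : V} (hab : a ≠ b) (c d : V) :
    contract a b (eV c d) = eV (if c = a then b else c) (if d = a then b else d) := by
  funext k
  rw [contract_apply]
  by_cases hca : c = a <;> by_cases hda : d = a <;>
    by_cases hka : k = a <;> by_cases hkb : k = b <;>
      simp_all [eV] <;> (try split_ifs) <;> (try simp_all) <;> try ring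
  all_goals (first | (exact fun h => ‹¬ _ = _› h.symm) | (exact (‹¬ _ = _› ‹_ = _›.symm).elim))

end Contract

section KeySpan

variable {V : Type*} [DecidableEq V]

lemma span_int_entries {s : Set (V → ℝ)} (hs : ∀ w ∈ s, ∀ i, ∃ z : ℤ, w i = (z : ℝ)) :
    ∀ x ∈ Submodule.span ℤ s, ∀ i, ∃ z : ℤ, x i = (z : ℝ) := by
  intro x hx
  refine Submodule.span_induction hs ?_ ?_ ?_ hx
  · intro i; exact ⟨0, by simp⟩
  · intro y z _ _ hy hz i
    obtain ⟨m, hm⟩ := hy i; obtain ⟨n, hn⟩ := hz i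
    exact ⟨m + n, by simp [hm, hn]⟩
  · intro a y _ hy i
    obtain ⟨m, hm⟩ := hy i
    exact ⟨a * m, by rw [Pi.smul_apply, hm, zsmul_eq_mul]; push_cast; ring⟩

lemma key_span : ∀ (n : ℕ) (s : Finset (V → ℝ)), s.card ≤ n →
    (∀ w ∈ s, ∃ a b : V, a ≠ b ∧ w = eV a b) →
    LinearIndependent ℝ ((↑) : ↥(s : Set (V → ℝ)) → (V → ℝ)) →
    ∀ x : V → ℝ, (∀ i, ∃ z : ℤ, x i = (z : ℝ)) →
    x ∈ Submodule.span ℝ (s : Set (V → ℝ)) → x ∈ Submodule.span ℤ (s : Set (V → ℝ)) := by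
  intro n
  induction n with
  | zero =>
    intro s hcard _ _ x _ hx
    have hse : s = ∅ := Finset.card_eq_zero.mp (Nat.le_zero.mp hcard)
    subst hse
    rw [Finset.coe_empty, Submodule.span_empty, Submodule.mem_bot] at hx
    subst hx; exact Submodule.zero_mem _
  | succ n ih =>
    intro s hcard hforms hli x hxint hxspan
    classical
    rcases Finset.eq_empty_or_nonempty s with rfl | ⟨w0, hw0⟩
    · rw [Finset.coe_empty, Submodule.span_empty, Submodule.mem_bot] at hxspan
      subst hxspan; exact Submodule.zero_mem _
    obtain ⟨a, b, hab, hw0eq⟩ := hforms w0 hw0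
    set φ := contract a b with hφ
    set t := s.erase w0 with ht
    have htsub : (t : Set (V → ℝ)) ⊆ (s : Set (V → ℝ)) := by
      rw [ht]; exact_mod_cast Finset.erase_subset _ _
    -- w0 is not in the span of t
    have hw0span : w0 ∉ Submodule.span ℝ (t : Set (V → ℝ)) := by
      have himg : ((↑) : ↥(s : Set (V → ℝ)) → (V → ℝ)) ''
          {i : ↥(s : Set (V → ℝ)) | (i : V → ℝ) ≠ w0} = (t : Set (V → ℝ)) := by
        have : {i : ↥(s : Set (V → ℝ)) | (i : V → ℝ) ≠ w0} =
            ((↑) : ↥(s : Set (V → ℝ)) → (V → ℝ)) ⁻¹' {w0}ᶜ := rfl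
        rw [this, Subtype.image_preimage_coe, ht, Finset.coe_erase, Set.diff_eq,
          Set.inter_comm]
      have h2 := hli.notMem_span_image (s := {i : ↥(s : Set (V → ℝ)) | (i : V → ℝ) ≠ w0})
        (x := ⟨w0, by exact_mod_cast hw0⟩) (by simp)
      rwa [himg] at h2
    have hker : LinearMap.ker φ ≤ Submodule.span ℝ {w0} := by
      intro y hy
      rw [LinearMap.mem_ker] at hy
      rw [contract_ker hab y hy, ← hw0eq]
      exact Submodule.smul_mem _ _ (Submodule.mem_span_singleton_self _)
    have hdisj : Disjoint (Submodule.span ℝ (t : Set (V → ℝ))) (LinearMap.ker φ) := by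
      rw [Submodule.disjoint_def]
      intro y hyt hyk
      obtain ⟨r, rfl⟩ := Submodule.mem_span_singleton.mp (hker hyk)
      rcases eq_or_ne r 0 with rfl | hr
      · simp
      · exact absurd (by simpa [hr] using Submodule.smul_mem _ r⁻¹ hyt :
          w0 ∈ Submodule.span ℝ (t : Set (V → ℝ))) hw0span
    have hlit : LinearIndependent ℝ ((↑) : ↥(t : Set (V → ℝ)) → (V → ℝ)) :=
      hli.comp (Set.inclusion htsub) (Set.inclusion_injective htsub)
    have hlit' : LinearIndependent ℝ (fun i : ↥(t : Set (V → ℝ)) => φ (i : V → ℝ)) :=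
      hlit.map (by rwa [Subtype.range_coe])
    classical
    set s' : Finset (V → ℝ) := t.image (fun y => φ y) with hs'
    have hs'coe : (s' : Set (V → ℝ)) = (fun y => φ y) '' (t : Set (V → ℝ)) :=
      Finset.coe_image
    have hli' : LinearIndependent ℝ ((↑) : ↥(s' : Set (V → ℝ)) → (V → ℝ)) := by
      have h3 : LinearIndependent ℝ (fun x : Set.range (fun i : ↥(t : Set (V → ℝ)) => φ (i : V → ℝ)) => (x : V → ℝ)) := hlit'.linearIndepOn_id
      have hre : Set.range (fun i : ↥(t : Set (V → ℝ)) => φ (i : V → ℝ))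
          = (s' : Set (V → ℝ)) := by
        rw [hs'coe]
        rw [show (fun i : ↥(t : Set (V → ℝ)) => φ (i : V → ℝ)) =
          (fun y => φ y) ∘ ((↑) : ↥(t : Set (V → ℝ)) → (V → ℝ)) from rfl,
          Set.range_comp, Subtype.range_coe]
      rwa [hre] at h3
    -- each element of s is either w0 or in t, and eV c d with (c,d) distinct from (a,b),(b,a)
    have hforms' : ∀ w ∈ s', ∃ a' b' : V, a' ≠ b' ∧ w = eV a' b' := by
      intro w hw
      obtain ⟨y, hyt, rfl⟩ := Finset.mem_image.mp hw
      obtain ⟨c, d, hcd, hyeq⟩ := hforms y (Finset.mem_of_mem_erase hyt)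
      have hynw0 : y ≠ w0 := Finset.ne_of_mem_erase hyt
      have hnotab : ¬(c = a ∧ d = b) := by
        rintro ⟨rfl, rfl⟩
        exact hynw0 (hyeq.trans hw0eq.symm)
      have hnotba : ¬(c = b ∧ d = a) := by
        rintro ⟨rfl, rfl⟩
        -- then y = eV b a = -w0 hence w0 = -y ∈ span t
        apply hw0span
        have : w0 = (-1 : ℝ) • y := by
          rw [hyeq, hw0eq, eV_neg]; simp
        rw [this]
        exact Submodule.smul_mem _ _ (Submodule.subset_span (Finset.mem_coe.mpr hyt))
      refine ⟨if c = a then b else c, if d = a then b else d, ?_, by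
        rw [hyeq, contract_eV hab]⟩
      by_cases hca : c = a
      · subst hca
        have hda : ¬ d = c := fun h => hcd h.symm
        simp only [if_pos rfl, if_neg hda]
        intro h; exact hnotab ⟨rfl, h.symm⟩
      · by_cases hda : d = a
        · subst hda
          simp only [if_neg hca, if_pos rfl]
          intro h; exact hnotba ⟨h, rfl⟩
        · simpa [hca, hda] using hcd
    have hcard' : s'.card ≤ n := by
      calc s'.card ≤ t.card := Finset.card_image_le
        _ = s.card - 1 := by rw [ht, Finset.card_erase_of_mem hw0]
        _ ≤ n := by omega
    -- φ x has integer entries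
    have hxint' : ∀ i, ∃ z : ℤ, φ x i = (z : ℝ) := by
      intro i
      rw [hφ, contract_apply]
      by_cases h1 : i = a
      · exact ⟨0, by simp [h1]⟩
      · by_cases h2 : i = b
        · obtain ⟨m, hm⟩ := hxint b; obtain ⟨n', hn⟩ := hxint a
          exact ⟨m + n', by simp [h1, h2, hm, hn, Ne.symm hab]⟩
        · obtain ⟨m, hm⟩ := hxint i
          exact ⟨m, by simp [h1, h2, hm]⟩
    -- φ x ∈ span ℝ s'
    have hxspan' : φ x ∈ Submodule.span ℝ (s' : Set (V → ℝ)) := by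
      have h1 : φ x ∈ Submodule.map φ (Submodule.span ℝ (s : Set (V → ℝ))) :=
        Submodule.mem_map_of_mem hxspan
      rw [Submodule.map_span] at h1
      have hins : (s : Set (V → ℝ)) = insert w0 (t : Set (V → ℝ)) := by
        rw [ht, Finset.coe_erase, Set.insert_diff_singleton,
          Set.insert_eq_of_mem (by exact_mod_cast hw0)]
      rw [hins, Set.image_insert_eq] at h1
      have hφw0 : φ w0 = 0 := by rw [hw0eq, hφ]; exact contract_eV_self hab
      rw [hφw0, Submodule.span_insert_zero, ← hs'coe] at h1
      exact h1
    have hIH := ih s' hcard' hforms' hli' (φ x) hxint' hxspan'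
    -- pull back along φ
    have hmap : Submodule.span ℤ (s' : Set (V → ℝ)) =
        Submodule.map (φ.restrictScalars ℤ) (Submodule.span ℤ (t : Set (V → ℝ))) := by
      rw [Submodule.map_span]
      congr 1
    rw [hmap] at hIH
    obtain ⟨z, hzmem, hzeq⟩ := hIH
    have hφdiff : φ (x - z) = 0 := by
      rw [map_sub]
      rw [show (φ.restrictScalars ℤ) z = φ z from rfl] at hzeq
      rw [hzeq, sub_self]
    have hxz : x - z = ((x - z) a) • eV a b := contract_ker hab _ hφdiff
    obtain ⟨zx, hzx⟩ := hxint a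
    have htint : ∀ w ∈ (t : Set (V → ℝ)), ∀ i, ∃ z : ℤ, w i = (z : ℝ) := by
      intro w hw i
      obtain ⟨c, d, _, rfl⟩ := hforms w (htsub hw)
      exact eV_int c d i
    obtain ⟨m, hm⟩ := span_int_entries htint z hzmem a
    have hxeq : x = z + (zx - m) • w0 := by
      have h5 : ((zx - m : ℤ) : ℝ) • eV a b = ((x - z) a) • eV a b := by
        congr 1
        rw [Pi.sub_apply, hzx, hm]; push_cast; ring
      rw [hw0eq, ← Int.cast_smul_eq_zsmul ℝ, h5, ← hxz]
      abel
    rw [hxeq]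
    exact Submodule.add_mem _
      (Submodule.span_mono htsub hzmem)
      (Submodule.smul_mem _ _ (Submodule.subset_span (by exact_mod_cast hw0)))

end KeySpan

section Graph

variable {V : Type*} [DecidableEq V]

lemma succAt_bijective {l : ℕ} (h : 0 < l) : Function.Bijective (succAt h) := by
  refine Finite.injective_iff_bijective.mp ?_
  intro j k hjk
  have hjk' : ((j : ℕ) + 1) % l = ((k : ℕ) + 1) % l := congrArg Fin.val hjk
  have hj := j.2
  have hk := k.2
  have e1 : ((j : ℕ) + 1) % l = if (j : ℕ) + 1 = l then 0 else (j : ℕ) + 1 := by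
    split_ifs with hc
    · rw [hc, Nat.mod_self]
    · exact Nat.mod_eq_of_lt (by omega)
  have e2 : ((k : ℕ) + 1) % l = if (k : ℕ) + 1 = l then 0 else (k : ℕ) + 1 := by
    split_ifs with hc
    · rw [hc, Nat.mod_self]
    · exact Nat.mod_eq_of_lt (by omega)
  rw [e1, e2] at hjk'
  apply Fin.ext
  split_ifs at hjk' <;> omega

lemma sum_rho_directed [Fintype V] (C : PreCycle V) (hd : C.IsDirected) :
    ∑ j, rho (C.arrow j) = 0 := by
  funext k
  rw [Finset.sum_apply]
  have harr : ∀ j, rho (C.arrow j) k =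
      (if k = C.v j then (1:ℝ) else 0) - (if k = C.v (C.nxt j) then (1:ℝ) else 0) := by
    intro j
    rw [PreCycle.arrow, if_pos (hd j)]
    rfl
  simp only [harr]
  rw [Finset.sum_sub_distrib]
  have hbij : ∑ j, (if k = C.v (C.nxt j) then (1:ℝ) else 0)
      = ∑ j, (if k = C.v j then (1:ℝ) else 0) :=
    Function.Bijective.sum_comp (succAt_bijective C.pos)
      (fun j => if k = C.v j then (1:ℝ) else 0)
  rw [hbij, sub_self]
  rfl

lemma zero_mem_polyG [Fintype V] {A : Finset (V × V)} (h : EveryArrowInDirCycle A)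
    (hA : A.Nonempty) : (0 : V → ℝ) ∈ polyG A := by
  obtain ⟨e, he⟩ := hA
  obtain ⟨C, hC, hdir, -⟩ := h e he
  have hmem : ∀ j ∈ (Finset.univ : Finset (Fin C.l)), rho (C.arrow j) ∈
      (rho '' (A : Set (V × V))) := fun j _ => Set.mem_image_of_mem _ (hC.1 j)
  have hw : ∀ j ∈ (Finset.univ : Finset (Fin C.l)), (0:ℝ) ≤ (1:ℝ) := fun _ _ => zero_le_one
  have hws : (0:ℝ) < ∑ _j : Fin C.l, (1:ℝ) := by
    rw [Finset.sum_const]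
    simp [Finset.card_univ]
    exact C.pos
  have := Finset.centerMass_mem_convexHull (t := Finset.univ)
    (w := fun _ : Fin C.l => (1:ℝ)) (z := fun j => rho (C.arrow j)) hw hws hmem
  have hcm : Finset.univ.centerMass (fun _ : Fin C.l => (1:ℝ)) (fun j => rho (C.arrow j))
      = (0 : V → ℝ) := by
    rw [Finset.centerMass]
    simp only [one_smul]
    rw [sum_rho_directed C hdir, smul_zero]
  rwa [hcm] at this

/-- The linear functional summing the coordinates. -/
def sumL (V : Type*) [Fintype V] : (V → ℝ) →ₗ[ℝ] ℝ where
  toFun x := ∑ i, x i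
  map_add' x y := by simp [Finset.sum_add_distrib]
  map_smul' c x := by simp [Finset.mul_sum]

lemma sumL_apply {V : Type*} [Fintype V] (x : V → ℝ) : sumL V x = ∑ i, x i := rfl

lemma eV_mem_ker [Fintype V] (a b : V) : eV a b ∈ LinearMap.ker (sumL V) := by
  rw [LinearMap.mem_ker, sumL_apply, sum_eV]

lemma finrank_ker_sumL {V : Type*} [Fintype V] [Nonempty V] :
    Module.finrank ℝ (LinearMap.ker (sumL V)) = Fintype.card V - 1 := by
  have hsurj : Function.Surjective (sumL V) := by
    intro c
    obtain ⟨v0⟩ := ‹Nonempty V›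
    classical
    refine ⟨fun i => if i = v0 then c else 0, ?_⟩
    rw [sumL_apply]
    simp
  have h1 := LinearMap.finrank_range_add_finrank_ker (sumL V)
  rw [LinearMap.range_eq_top.mpr hsurj] at h1
  have h2 : Module.finrank ℝ (⊤ : Submodule ℝ ℝ) = 1 := by
    rw [finrank_top, Module.finrank_self]
  have h3 : Module.finrank ℝ (V → ℝ) = Fintype.card V := by
    simp [Module.finrank_pi]
  omega

lemma vectorSpan_polyG_eq {V : Type*} [Fintype V] [DecidableEq V] {A : Finset (V × V)}
    (hconn : GConnected A) (h0 : (0 : V → ℝ) ∈ polyG A) :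
    vectorSpan ℝ (rho '' (A : Set (V × V))) = LinearMap.ker (sumL V) := by
  set s : Set (V → ℝ) := rho '' (A : Set (V × V)) with hs
  have hsk : s ⊆ (LinearMap.ker (sumL V) : Set (V → ℝ)) := by
    rintro _ ⟨e, _, rfl⟩
    exact eV_mem_ker e.1 e.2
  apply le_antisymm
  · rw [vectorSpan_def]
    rw [Submodule.span_le]
    rintro y hy
    obtain ⟨p, hp, q, hq, rfl⟩ := hy
    exact Submodule.sub_mem _ (hsk hp) (hsk hq)
  · -- 0 ∈ affineSpan s
    have h0aff : (0 : V → ℝ) ∈ affineSpan ℝ s := by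
      have hsub : polyG A ⊆ (affineSpan ℝ s : Set (V → ℝ)) := by
        rw [polyG, ← hs]
        exact convexHull_min (subset_affineSpan ℝ s) (AffineSubspace.convex _)
      exact hsub h0
    have hrho : ∀ e ∈ A, rho e ∈ vectorSpan ℝ s := by
      intro e he
      have h1 : rho e ∈ affineSpan ℝ s := subset_affineSpan ℝ s (Set.mem_image_of_mem _ he)
      have h2 := AffineSubspace.vsub_mem_direction h1 h0aff
      rw [direction_affineSpan] at h2
      simpa [vsub_eq_sub] using h2
    have hkey : ∀ (i j : V)
        (_ : (SimpleGraph.fromRel fun i j => (i, j) ∈ A).Walk i j),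
        eV i j ∈ vectorSpan ℝ s := by
      intro i j w
      induction w with
      | nil => rw [eV_self]; exact Submodule.zero_mem _
      | @cons u p q hadj w ih =>
        rw [SimpleGraph.fromRel_adj] at hadj
        have hup : eV u p ∈ vectorSpan ℝ s := by
          rcases hadj.2 with hA | hA
          · exact rho_eq_eV (u, p) ▸ hrho (u, p) hA
          · rw [eV_neg p u]
            exact Submodule.neg_mem _ (rho_eq_eV (p, u) ▸ hrho (p, u) hA)
        have := eV_trans u p q
        rw [this]
        exact Submodule.add_mem _ hup ih
    intro x hx
    rw [LinearMap.mem_ker, sumL_apply] at hx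
    obtain ⟨i0⟩ := hconn.nonempty
    have hxe : x = ∑ i, x i • eV i i0 := by
      funext k
      rw [Finset.sum_apply]
      simp only [Pi.smul_apply, eV, smul_eq_mul, mul_sub]
      rw [Finset.sum_sub_distrib]
      rw [← Finset.sum_mul]
      simp [Finset.sum_ite_eq, hx]
    rw [hxe]
    exact Submodule.sum_mem _ fun i _ =>
      Submodule.smul_mem _ _ (hkey i i0 (hconn.preconnected i i0).some)

end Graph

section Facet

open Module

lemma linIndep_of_affIndep {V : Type*} {W : Set (V → ℝ)}
    (haff : AffineIndependent ℝ ((↑) : W → (V → ℝ)))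
    (h0 : (0 : V → ℝ) ∉ affineSpan ℝ W) :
    LinearIndependent ℝ ((↑) : W → (V → ℝ)) := by
  rw [linearIndependent_iff']
  intro t g hg i hi
  by_cases hσ : ∑ j ∈ t, g j = 0
  · exact affineIndependent_iff.mp haff t g hσ hg i hi
  · exfalso
    apply h0
    have hw : ∑ j ∈ t, (∑ j ∈ t, g j)⁻¹ * g j = 1 := by
      rw [← Finset.mul_sum, inv_mul_cancel₀ hσ]
    have h3 : t.affineCombination ℝ ((↑) : W → (V → ℝ)) (fun j => (∑ j ∈ t, g j)⁻¹ * g j)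
        = 0 := by
      rw [Finset.affineCombination_eq_linear_combination _ _ _ hw]
      calc ∑ j ∈ t, ((∑ j ∈ t, g j)⁻¹ * g j) • (j : V → ℝ)
          = (∑ j ∈ t, g j)⁻¹ • ∑ j ∈ t, g j • (j : V → ℝ) := by
            rw [Finset.smul_sum]; simp_rw [smul_smul]
        _ = 0 := by rw [hg, smul_zero]
    have h4 := affineCombination_mem_affineSpan hw ((↑) : W → (V → ℝ))
    rw [h3, Subtype.range_coe] at h4
    exact h4

/-- if every arrow lies in a directed cycle and `P_G` is simplicial, then
`P_G` is smooth: the vertices of every facet form a `ℤ`-basis of the lattice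
`ℤ^d ∩ {x : Σ xᵢ = 0}`. -/
theorem stmt9 {d : ℕ} (A : Finset (Fin d × Fin d)) (hconn : GConnected A)
    (h : EveryArrowInDirCycle A) (hs : Simplicial (polyG A)) :
    ∀ F : Set (Fin d → ℝ), IsFacetOf F (polyG A) →
      IsZBasisOf (F.extremePoints ℝ) (latticeSet (Fin d)) := by
  classical
  intro F hF
  have haff := hs F hF
  obtain ⟨hexp, hFne, hdim⟩ := hF
  set P : Set (Fin d → ℝ) := polyG A with hP
  set s : Set (Fin d → ℝ) := rho '' (A : Set (Fin d × Fin d)) with hsdef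
  have hPs : P = convexHull ℝ s := rfl
  have hconn' : (SimpleGraph.fromRel fun i j => (i, j) ∈ A).Connected := hconn
  have hVne : Nonempty (Fin d) := hconn'.nonempty
  have hsfin : s.Finite := A.finite_toSet.image rho
  have hAne : A.Nonempty := by
    rcases Finset.eq_empty_or_nonempty A with rfl | h'
    · exfalso
      obtain ⟨x, hx⟩ := hFne
      have hxP := hexp.subset hx
      simp only [hP, polyG, Finset.coe_empty, Set.image_empty, convexHull_empty] at hxP
      exact hxP
    · exact h'
  have h0P : (0 : Fin d → ℝ) ∈ P := zero_mem_polyG h hAne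
  obtain ⟨l, hFeq⟩ := hexp hFne
  obtain ⟨x0, hx0⟩ := hFne
  have hx0' := hFeq ▸ hx0
  have hx0P : x0 ∈ P := hx0'.1
  have hcmax : ∀ y ∈ P, l y ≤ l x0 := hx0'.2
  have hsP : s ⊆ P := subset_convexHull ℝ s
  have hc0 : 0 ≤ l x0 := by simpa using hcmax 0 h0P
  have hcpos : 0 < l x0 := by
    rcases hc0.lt_or_eq with h' | h'
    · exact h'
    · exfalso
      have hls : ∀ y ∈ s, l y = 0 := by
        rintro _ ⟨e, he, rfl⟩
        obtain ⟨C, hC, hdir, j0, hj0⟩ := h e he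
        have hsum : ∑ j, l (rho (C.arrow j)) = 0 := by
          rw [← map_sum, sum_rho_directed C hdir, map_zero]
        have hnp : ∀ j ∈ Finset.univ, l (rho (C.arrow j)) ≤ 0 := fun j _ => by
          rw [h']
          exact hcmax _ (hsP (Set.mem_image_of_mem _ (hC.1 j)))
        have hall := (Finset.sum_eq_zero_iff_of_nonpos hnp).mp hsum j0 (Finset.mem_univ _)
        rw [hj0] at hall
        exact hall
      have hl0 : ∀ y ∈ P, l y = 0 := by
        intro y hy
        have hconv : Convex ℝ {x : Fin d → ℝ | l x = 0} := by
          intro p hp q hq a b _ _ _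
          simp only [Set.mem_setOf_eq] at hp hq ⊢
          rw [map_add, map_smul, map_smul, hp, hq]; simp
        have hPsub : P ⊆ {x : Fin d → ℝ | l x = 0} := by
          rw [hPs]; exact convexHull_min hls hconv
        exact hPsub hy
      have hFP : F = P := by
        rw [hFeq]
        apply Set.eq_of_subset_of_subset
        · rintro x ⟨hx, _⟩; exact hx
        · intro x hx
          exact ⟨hx, fun y hy => by rw [hl0 y hy, hl0 x hx]⟩
      rw [hFP] at hdim; omega
  set W := F.extremePoints ℝ with hW
  have hWF : W ⊆ F := extremePoints_subset
  have hFsubP : F ⊆ P := hexp.subset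
  have hWs : W ⊆ s := by
    intro w hw
    have h1 : w ∈ P.extremePoints ℝ := hexp.isExtreme.extremePoints_subset_extremePoints hw
    rw [hPs] at h1
    exact extremePoints_convexHull_subset h1
  have hWfin : W.Finite := hsfin.subset hWs
  haveI hWfint : Fintype ↥W := hWfin.fintype
  have hlW : ∀ w ∈ W, l w = l x0 := by
    intro w hw
    have hwF := hWF hw
    have hwF' := hFeq ▸ hwF
    exact le_antisymm (hcmax w (hFsubP hwF)) (hwF'.2 x0 hx0P)
  have h0aff : (0 : Fin d → ℝ) ∉ affineSpan ℝ W := by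
    intro h0m
    have h0m' : (0 : Fin d → ℝ) ∈ affineSpan ℝ (Set.range ((↑) : W → (Fin d → ℝ))) := by
      rwa [Subtype.range_coe]
    obtain ⟨t, w, hw, h0eq⟩ := eq_affineCombination_of_mem_affineSpan h0m'
    have hzc : (0:ℝ) = l x0 := by
      have hc := congrArg l h0eq
      rw [map_zero, Finset.affineCombination_eq_linear_combination _ _ _ hw, map_sum] at hc
      rw [hc]
      have hterm : ∀ j ∈ t, l (w j • (j : Fin d → ℝ)) = w j * l x0 := by
        intro j hj
        rw [map_smul, hlW _ j.2]
        rfl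
      rw [Finset.sum_congr rfl hterm, ← Finset.sum_mul, hw, one_mul]
    linarith
  have hliR : LinearIndependent ℝ ((↑) : W → (Fin d → ℝ)) := linIndep_of_affIndep haff h0aff
  have hliZ : LinearIndependent ℤ ((↑) : W → (Fin d → ℝ)) := by
    refine hliR.restrict_scalars ?_
    intro p q hpq
    simpa using hpq
  have hforms : ∀ w ∈ W, ∃ a b : Fin d, a ≠ b ∧ w = eV a b := by
    intro w hw
    obtain ⟨⟨a, b⟩, he, rfl⟩ := hWs hw
    refine ⟨a, b, ?_, rfl⟩
    rintro rfl
    exact hliR.ne_zero ⟨rho (a, a), hw⟩ (show rho (a, a) = 0 from (rho_eq_eV (a, a)).trans (eV_self a))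
  have hPcomp : IsCompact P := hsfin.isCompact_convexHull ℝ
  have hFcomp : IsCompact F := hexp.isCompact hPcomp
  have hFconv : Convex ℝ F := hexp.convex (convex_convexHull ℝ s)
  have hFKM : convexHull ℝ W = F := by
    have h1 := closure_convexHull_extremePoints hFcomp hFconv
    rwa [IsClosed.closure_eq (hWfin.isCompact_convexHull ℝ).isClosed] at h1
  have hWne : W.Nonempty := by
    have h2 : (convexHull ℝ W).Nonempty := by rw [hFKM]; exact ⟨x0, hx0⟩
    exact convexHull_nonempty_iff.mp h2
  haveI : Nonempty ↥W := hWne.to_subtype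
  have hcardpos : 1 ≤ Fintype.card ↥W := Fintype.card_pos
  have hfrW : finrank ℝ (vectorSpan ℝ W) = Fintype.card ↥W - 1 := by
    have h1 := haff.finrank_vectorSpan (n := Fintype.card ↥W - 1) (by omega)
    rwa [Subtype.range_coe] at h1
  have hpdimF : pdim F = Fintype.card ↥W - 1 := by
    rw [pdim, ← hFKM, ← direction_affineSpan, affineSpan_convexHull, direction_affineSpan, hfrW]
  have hVSP : vectorSpan ℝ P = LinearMap.ker (sumL (Fin d)) := by
    rw [hPs, ← direction_affineSpan, affineSpan_convexHull, direction_affineSpan]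
    exact vectorSpan_polyG_eq hconn h0P
  have hpdimP : pdim P = d - 1 := by
    rw [pdim, hVSP, finrank_ker_sumL]
    simp
  have hcardW : Fintype.card ↥W = d - 1 := by
    rw [hpdimF] at hdim
    rw [hpdimP] at hdim
    omega
  have hWker : W ⊆ (LinearMap.ker (sumL (Fin d)) : Set (Fin d → ℝ)) := by
    intro w hw
    obtain ⟨a, b, _, rfl⟩ := hforms w hw
    exact eV_mem_ker a b
  have hspanle : Submodule.span ℝ W ≤ LinearMap.ker (sumL (Fin d)) :=
    Submodule.span_le.mpr hWker
  have hfrspan : finrank ℝ (Submodule.span ℝ W) = Fintype.card ↥W := by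
    rw [finrank_span_set_eq_card hliR, Set.toFinset_card]
  have hspaneq : Submodule.span ℝ W = LinearMap.ker (sumL (Fin d)) :=
    Submodule.eq_of_le_of_finrank_le hspanle
      (by rw [hfrspan, finrank_ker_sumL, hcardW]; simp)
  refine ⟨?_, hliZ, ?_⟩
  · intro w hw
    obtain ⟨e, he, rfl⟩ := hWs hw
    exact ⟨fun i => eV_int e.1 e.2 i, sum_eV e.1 e.2⟩
  · intro x hx
    obtain ⟨hxint, hxsum⟩ := hx
    have hxker : x ∈ LinearMap.ker (sumL (Fin d)) := by
      rw [LinearMap.mem_ker, sumL_apply]; exact hxsum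
    have hxspan : x ∈ Submodule.span ℝ W := by rw [hspaneq]; exact hxker
    have hco : (hWfin.toFinset : Set (Fin d → ℝ)) = W := hWfin.coe_toFinset
    have h1 := key_span hWfin.toFinset.card hWfin.toFinset le_rfl
      (fun w hw => hforms w (hWfin.mem_toFinset.mp hw))
      (by rw [hco]; exact hliR)
      x hxint (by rw [hco]; exact hxspan)
    rwa [hco] at h1


end Facet
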